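/- Let a, b, c ∈ ℝ and define M, N : ℝ × (0,∞) → ℝ by M(x,y) = (a/2)(x² − y²) + bx + c and N(x,y) = axy + by. Then for all λ, ρ ∈ ℝ with λ = 2ρ − 1, the triple (M, N, λ) satisfies the Ricci–Bourguignon soliton system on the upper half-plane: ∂M/∂x(x,y) − N(x,y)/y = λ − 2ρ + 1, ∂M/∂y(x,y) + ∂N/∂x(x,y) = 0, and ∂N/∂y(x,y) − N(x,y)/y = λ − 2ρ + 1 for all (x,y) with y > 0; in particular the vector field X = M∂x + N∂y is a Killing field of the hyperbolic metric. -/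
import Mathlib


open Set

/-- Partial derivative with respect to the first variable. -/
noncomputable def pdx (f : ℝ → ℝ → ℝ) (x y : ℝ) : ℝ := deriv (fun t => f t y) x

/-- Partial derivative with respect to the second variable. -/
noncomputable def pdy (f : ℝ → ℝ → ℝ) (x y : ℝ) : ℝ := deriv (fun t => f x t) y

/-- converse direction implicit in Corollaries 3.4, 3.6 and 3.8: the explicit
fields `M = (a/2)(x²-y²) + bx + c`, `N = axy + by` satisfy the Ricci–Bourguignon soliton system
with `λ = 2ρ - 1`; in particular `X = M∂x + N∂y` is Killing. -/
theorem stmt_15 (a b c : ℝ)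
    (M N : ℝ → ℝ → ℝ)
    (hMdef : ∀ x y : ℝ, M x y = a / 2 * (x ^ 2 - y ^ 2) + b * x + c)
    (hNdef : ∀ x y : ℝ, N x y = a * x * y + b * y) :
    ∀ lam rho : ℝ, lam = 2 * rho - 1 →
      (∀ x y : ℝ, 0 < y →
        (pdx M x y - N x y / y = lam - 2 * rho + 1) ∧
        (pdy M x y + pdx N x y = 0) ∧
        (pdy N x y - N x y / y = lam - 2 * rho + 1)) ∧
      (∀ x y : ℝ, 0 < y →
        pdx M x y - N x y / y = 0 ∧
        pdy M x y + pdx N x y = 0 ∧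
        pdy N x y - N x y / y = 0) := by
  intro lam rho hlam
  have hMx : ∀ x y : ℝ, pdx M x y = a * x + b := by
    intro x y
    have : (fun t => M t y) = fun t => a / 2 * (t ^ 2 - y ^ 2) + b * t + c := by
      funext t; exact hMdef t y
    rw [pdx, this]
    have h1 : HasDerivAt (fun t : ℝ => t ^ 2 - y ^ 2) (2 * x) x := by
      simpa using ((hasDerivAt_pow 2 x).sub_const (y ^ 2))
    have h2 : HasDerivAt (fun t : ℝ => b * t) b x := by
      simpa using (hasDerivAt_id x).const_mul b
    have h : HasDerivAt (fun t : ℝ => a / 2 * (t ^ 2 - y ^ 2) + b * t + c)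
        (a / 2 * (2 * x) + b) x := ((h1.const_mul (a / 2)).add h2).add_const c
    rw [h.deriv]; ring
  have hMy : ∀ x y : ℝ, pdy M x y = -(a * y) := by
    intro x y
    have heq : (fun t => M x t) = fun t => a / 2 * (x ^ 2 - t ^ 2) + b * x + c := by
      funext t; exact hMdef x t
    rw [pdy, heq]
    have h : HasDerivAt (fun t : ℝ => a / 2 * (x ^ 2 - t ^ 2) + b * x + c) (a / 2 * (-(2 * y))) y := by
      have h1 : HasDerivAt (fun t : ℝ => x ^ 2 - t ^ 2) (-(2 * y)) y := by
        simpa using (hasDerivAt_pow 2 y).const_sub (x ^ 2)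
      exact ((h1.const_mul (a / 2)).add_const (b * x)).add_const c
    rw [h.deriv]; ring
  have hNx : ∀ x y : ℝ, pdx N x y = a * y := by
    intro x y
    have heq : (fun t => N t y) = fun t => a * t * y + b * y := by
      funext t; exact hNdef t y
    rw [pdx, heq]
    have h : HasDerivAt (fun t : ℝ => a * t * y + b * y) (a * y) x := by
      have : HasDerivAt (fun t : ℝ => t * (a * y)) (a * y) x := by
        simpa using (hasDerivAt_id x).mul_const (a * y)
      exact (this.add_const (b * y)).congr_of_eventuallyEq (by filter_upwards with t; ring)
    rw [h.deriv]
  have hNy : ∀ x y : ℝ, pdy N x y = a * x + b := by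
    intro x y
    have heq : (fun t => N x t) = fun t => (a * x + b) * t := by
      funext t; rw [hNdef]; ring
    rw [pdy, heq]
    have h : HasDerivAt (fun t : ℝ => (a * x + b) * t) (a * x + b) y := by
      simpa using (hasDerivAt_id y).const_mul (a * x + b)
    rw [h.deriv]
  constructor <;> intro x y hy <;>
    refine ⟨?_, ?_, ?_⟩ <;>
    simp [hMx, hMy, hNx, hNy, hNdef, hlam] <;>
    field_simp <;> ring
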